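/- For |q| < 1 (or as formal power series in q), (q;q)_∞ · ∑_{m≥1} m q^m/(q;q)_m = ∑_{m≥1} q^m/(1−q^m). -/

import Mathlib

open Finset Filter Topology

namespace Uchimura

noncomputable def P (q : ℂ) (n : ℕ) : ℂ := ∏ i ∈ Finset.range n, (1 - q ^ (i + 1))

noncomputable def Fq (q : ℂ) (n : ℕ) : ℂ := ∑' m : ℕ, q ^ ((n + 1) * m) / P q m

noncomputable def Gq (q : ℂ) (n : ℕ) : ℂ :=
  ∑' m : ℕ, ((m : ℂ) + 1) * q ^ ((n + 1) * (m + 1)) / P q (m + 1)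

variable {q : ℂ}

lemma norm_pow_lt (hq : ‖q‖ < 1) (k : ℕ) : ‖q ^ (k + 1)‖ < 1 := by
  rw [norm_pow]; exact pow_lt_one₀ (norm_nonneg q) hq (Nat.succ_ne_zero k)

lemma factor_ne (hq : ‖q‖ < 1) (k : ℕ) : (1 : ℂ) - q ^ (k + 1) ≠ 0 := by
  intro h
  have h1 : q ^ (k + 1) = 1 := by linear_combination -h
  have h2 := norm_pow_lt hq k
  rw [h1, norm_one] at h2
  exact lt_irrefl 1 h2

lemma P_ne (hq : ‖q‖ < 1) (n : ℕ) : P q n ≠ 0 :=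
  Finset.prod_ne_zero_iff.mpr fun i _ => factor_ne hq i

lemma P_succ (q : ℂ) (n : ℕ) : P q (n + 1) = P q n * (1 - q ^ (n + 1)) :=
  Finset.prod_range_succ _ _

lemma pow_norm_le (hq : ‖q‖ < 1) {a b : ℕ} (h : b ≤ a) : ‖q‖ ^ a ≤ ‖q‖ ^ b :=
  pow_le_pow_of_le_one (norm_nonneg q) hq.le h

lemma exp_le_one_sub (hq : ‖q‖ < 1) {x : ℝ} (h0 : 0 ≤ x) (h1 : x ≤ ‖q‖) :
    Real.exp (-(x / (1 - ‖q‖))) ≤ 1 - x := by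
  set r := ‖q‖ with hr
  have hr0 : 0 ≤ r := norm_nonneg q
  have h1r : 0 < 1 - r := by linarith
  set t := x / (1 - r) with ht
  have ht0 : 0 ≤ t := div_nonneg h0 h1r.le
  have h2 : (1 : ℝ) + t ≤ Real.exp t := by linarith [Real.add_one_le_exp t]
  have h3 : Real.exp (-t) ≤ (1 + t)⁻¹ := by
    rw [Real.exp_neg]
    exact inv_anti₀ (by linarith) h2
  refine h3.trans ?_
  have h4 : (1 - x) * (1 + t) - 1 = x * (r - x) / (1 - r) := by
    rw [ht]; field_simp; ring
  have h5 : (0:ℝ) ≤ x * (r - x) / (1 - r) :=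
    div_nonneg (mul_nonneg h0 (by linarith)) h1r.le
  have h6 : (1:ℝ) ≤ (1 - x) * (1 + t) := by linarith
  have h7 : (1:ℝ) / (1 + t) ≤ 1 - x := by
    rw [div_le_iff₀ (by linarith : (0:ℝ) < 1 + t)]
    linarith
  rwa [one_div] at h7

lemma P_lower (hq : ‖q‖ < 1) (n : ℕ) :
    Real.exp (-(‖q‖ / (1 - ‖q‖) ^ 2)) ≤ ‖P q n‖ := by
  set r := ‖q‖ with hr
  have hr0 : 0 ≤ r := norm_nonneg q
  have h1r : 0 < 1 - r := by linarith
  have hpow : ∀ i : ℕ, r ^ (i + 1) ≤ r := fun i => by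
    simpa using pow_norm_le hq (show 1 ≤ i + 1 by omega)
  have step1 : ∀ i : ℕ, Real.exp (-(r ^ (i + 1) / (1 - r))) ≤ 1 - r ^ (i + 1) :=
    fun i => exp_le_one_sub hq (by positivity) (hpow i)
  have hsum : ∑ i ∈ Finset.range n, r ^ (i + 1) / (1 - r) ≤ r / (1 - r) ^ 2 := by
    have hg : ∑ i ∈ Finset.range n, r ^ i ≤ (1 - r)⁻¹ := by
      have h := Summable.sum_le_tsum (Finset.range n) (fun i _ => by positivity)
        (summable_geometric_of_lt_one hr0 hq)
      rwa [tsum_geometric_of_lt_one hr0 hq] at h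
    have h2 : ∑ i ∈ Finset.range n, r ^ (i + 1) ≤ r * (1 - r)⁻¹ := by
      have : ∑ i ∈ Finset.range n, r ^ (i + 1) = r * ∑ i ∈ Finset.range n, r ^ i := by
        rw [Finset.mul_sum]; exact Finset.sum_congr rfl fun i _ => by ring
      rw [this]
      exact mul_le_mul_of_nonneg_left hg hr0
    rw [← Finset.sum_div]
    rw [div_le_div_iff₀ h1r (by positivity)]
    calc (∑ i ∈ Finset.range n, r ^ (i + 1)) * (1 - r) ^ 2
        ≤ (r * (1 - r)⁻¹) * (1 - r) ^ 2 := by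
          apply mul_le_mul_of_nonneg_right h2 (by positivity)
      _ = r * (1 - r) := by field_simp
  have h2 : Real.exp (-(r / (1 - r) ^ 2)) ≤
      Real.exp (∑ i ∈ Finset.range n, -(r ^ (i + 1) / (1 - r))) := by
    apply Real.exp_le_exp.mpr
    rw [Finset.sum_neg_distrib]
    linarith
  have h3 : Real.exp (∑ i ∈ Finset.range n, -(r ^ (i + 1) / (1 - r))) =
      ∏ i ∈ Finset.range n, Real.exp (-(r ^ (i + 1) / (1 - r))) := Real.exp_sum _ _
  have h4 : ∏ i ∈ Finset.range n, Real.exp (-(r ^ (i + 1) / (1 - r))) ≤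
      ∏ i ∈ Finset.range n, (1 - r ^ (i + 1)) :=
    Finset.prod_le_prod (fun i _ => (Real.exp_pos _).le) (fun i _ => step1 i)
  have h5 : ∏ i ∈ Finset.range n, (1 - r ^ (i + 1)) ≤
      ∏ i ∈ Finset.range n, ‖1 - q ^ (i + 1)‖ := by
    apply Finset.prod_le_prod
    · intro i _
      have := hpow i; linarith
    · intro i _
      have h := norm_sub_norm_le (1 : ℂ) (q ^ (i + 1))
      rwa [norm_one, norm_pow] at h
  have h6 : ‖P q n‖ = ∏ i ∈ Finset.range n, ‖1 - q ^ (i + 1)‖ := by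
    rw [P, norm_prod]
  rw [h6]
  calc Real.exp (-(r / (1 - r) ^ 2)) ≤ _ := h2
    _ = _ := h3
    _ ≤ _ := h4
    _ ≤ _ := h5

lemma summable_base (hq : ‖q‖ < 1) : Summable (fun m : ℕ => ((m : ℝ) + 1) * ‖q‖ ^ m) := by
  have h1 : Summable (fun m : ℕ => (m : ℝ) ^ 1 * ‖q‖ ^ m) :=
    summable_pow_mul_geometric_of_norm_lt_one 1
      (by rwa [Real.norm_eq_abs, abs_of_nonneg (norm_nonneg q)])
  have h2 : Summable (fun m : ℕ => ‖q‖ ^ m) := summable_geometric_of_lt_one (norm_nonneg q) hq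
  exact (h1.add h2).congr fun m => by rw [pow_one]; ring

lemma summable_of_bound (hq : ‖q‖ < 1) {f : ℕ → ℂ} (K : ℝ)
    (h : ∀ m, ‖f m‖ ≤ K * (((m : ℝ) + 1) * ‖q‖ ^ m)) : Summable f :=
  Summable.of_norm_bounded ((summable_base hq).mul_left K) h

lemma norm_cast_add_one (m : ℕ) : ‖((m : ℂ) + 1)‖ = (m : ℝ) + 1 := by
  have h : ((m : ℂ) + 1) = (((m + 1 : ℕ)) : ℂ) := by push_cast; ring
  rw [h, Complex.norm_natCast]; push_cast; ring

end Uchimura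
namespace Uchimura
variable {q : ℂ}

lemma norm_div_P_le (hq : ‖q‖ < 1) (x : ℂ) (n : ℕ) :
    ‖x / P q n‖ ≤ ‖x‖ * (Real.exp (-(‖q‖ / (1 - ‖q‖) ^ 2)))⁻¹ := by
  rw [norm_div, div_eq_mul_inv]
  have h1 : (0:ℝ) < Real.exp (-(‖q‖ / (1 - ‖q‖) ^ 2)) := Real.exp_pos _
  have h2 := P_lower hq n
  gcongr


lemma SA (hq : ‖q‖ < 1) (n : ℕ) : Summable (fun m : ℕ => q ^ ((n + 1) * m) / P q m) := by
  apply summable_of_bound hq (Real.exp (-(‖q‖ / (1 - ‖q‖) ^ 2)))⁻¹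
  intro m
  refine (norm_div_P_le hq _ m).trans ?_
  rw [norm_pow]
  have h1 : ‖q‖ ^ ((n + 1) * m) ≤ ‖q‖ ^ m := pow_norm_le hq (Nat.le_mul_of_pos_left m (Nat.succ_pos n))
  have h2 : ‖q‖ ^ m ≤ ((m : ℝ) + 1) * ‖q‖ ^ m := by
    nlinarith [pow_nonneg (norm_nonneg q) m, Nat.cast_nonneg (α := ℝ) m]
  have h3 : (0:ℝ) < (Real.exp (-(‖q‖ / (1 - ‖q‖) ^ 2)))⁻¹ := by positivity
  calc ‖q‖ ^ ((n + 1) * m) * (Real.exp (-(‖q‖ / (1 - ‖q‖) ^ 2)))⁻¹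
      ≤ (((m : ℝ) + 1) * ‖q‖ ^ m) * (Real.exp (-(‖q‖ / (1 - ‖q‖) ^ 2)))⁻¹ := by
        apply mul_le_mul_of_nonneg_right (h1.trans h2) h3.le
    _ = _ := by ring

lemma norm_term_le (hq : ‖q‖ < 1) (n c m : ℕ) :
    ‖((m : ℂ) + 1) * q ^ ((n + 1) * (m + 1)) / P q (m + c)‖ ≤
      (Real.exp (-(‖q‖ / (1 - ‖q‖) ^ 2)))⁻¹ * ((‖q‖ ^ (n + 1)) * (((m : ℝ) + 1) * ‖q‖ ^ m)) := by
  refine (norm_div_P_le hq _ _).trans ?_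
  rw [norm_mul, norm_pow, norm_cast_add_one]
  have h1 : ‖q‖ ^ ((n + 1) * (m + 1)) ≤ ‖q‖ ^ (n + 1) * ‖q‖ ^ m := by
    rw [← pow_add]
    exact pow_norm_le hq (by nlinarith)
  have h3 : (0:ℝ) < (Real.exp (-(‖q‖ / (1 - ‖q‖) ^ 2)))⁻¹ := by positivity
  have hm : (0:ℝ) ≤ (m : ℝ) + 1 := by positivity
  calc ((m : ℝ) + 1) * ‖q‖ ^ ((n + 1) * (m + 1)) * (Real.exp (-(‖q‖ / (1 - ‖q‖) ^ 2)))⁻¹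
      ≤ ((m : ℝ) + 1) * (‖q‖ ^ (n + 1) * ‖q‖ ^ m) * (Real.exp (-(‖q‖ / (1 - ‖q‖) ^ 2)))⁻¹ := by
        apply mul_le_mul_of_nonneg_right (mul_le_mul_of_nonneg_left h1 hm) h3.le
    _ = _ := by ring

lemma norm_term_le' (hq : ‖q‖ < 1) (n c m : ℕ) :
    ‖((m : ℂ) + 1) * q ^ ((n + 1) * (m + 1)) / P q (m + c)‖ ≤
      ((Real.exp (-(‖q‖ / (1 - ‖q‖) ^ 2)))⁻¹ * ‖q‖ ^ (n + 1)) * (((m : ℝ) + 1) * ‖q‖ ^ m) := by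
  refine (norm_term_le hq n c m).trans ?_
  apply le_of_eq; ring

lemma SB (hq : ‖q‖ < 1) (n : ℕ) :
    Summable (fun m : ℕ => ((m : ℂ) + 1) * q ^ ((n + 1) * (m + 1)) / P q (m + 1)) :=
  summable_of_bound hq _ (fun m => norm_term_le' hq n 1 m)

lemma SC (hq : ‖q‖ < 1) (n : ℕ) :
    Summable (fun m : ℕ => ((m : ℂ) + 1) * q ^ ((n + 1) * (m + 1)) / P q m) :=
  summable_of_bound hq _ (fun m => by simpa using norm_term_le' hq n 0 m)

lemma SV (hq : ‖q‖ < 1) (n : ℕ) :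
    Summable (fun m : ℕ => q ^ ((n + 1) * (m + 1)) / P q m) := by
  have h : ∀ m : ℕ, q ^ ((n + 1) * (m + 1)) / P q m
      = q ^ (n + 1) * (q ^ ((n + 1) * m) / P q m) := by
    intro m
    rw [show (n + 1) * (m + 1) = (n + 1) * m + (n + 1) by ring, pow_add]
    ring
  exact (((SA hq n).mul_left (q ^ (n + 1))).congr fun m => (h m).symm)

lemma SD (hq : ‖q‖ < 1) (n : ℕ) :
    Summable (fun m : ℕ => (m : ℂ) * q ^ ((n + 1) * (m + 1)) / P q m) := by
  have := (SC hq n).sub (SV hq n)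
  exact this.congr fun m => by ring

lemma tsum_shift {u : ℕ → ℂ} (hu : Summable u) (h0 : u 0 = 0) :
    ∑' m, u m = ∑' m, u (m + 1) := by
  rw [Summable.tsum_eq_zero_add hu, h0, zero_add]

lemma Fq_rec (hq : ‖q‖ < 1) (n : ℕ) : Fq q (n + 1) = (1 - q ^ (n + 1)) * Fq q n := by
  have hA := SA hq n
  have hA1 := SA hq (n + 1)
  set u : ℕ → ℂ := fun m => q ^ ((n + 1) * m) / P q m - q ^ ((n + 2) * m) / P q m with hu
  have hus : Summable u := hA.sub hA1
  have h1 : ∑' m, u m = Fq q n - Fq q (n + 1) := Summable.tsum_sub hA hA1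
  have h0 : u 0 = 0 := by simp [hu]
  have h2 : ∀ m : ℕ, u (m + 1) = q ^ (n + 1) * (q ^ ((n + 1) * m) / P q m) := by
    intro m
    have hfac := factor_ne hq m
    have hPm := P_ne hq m
    rw [hu]
    simp only
    rw [P_succ, show (n + 2) * (m + 1) = (n + 1) * (m + 1) + (m + 1) by ring,
      show (n + 1) * (m + 1) = (n + 1) * m + (n + 1) by ring, pow_add, pow_add]
    field_simp
    ring
  have h3 : ∑' m, u m = q ^ (n + 1) * Fq q n := by
    rw [tsum_shift hus h0, tsum_congr h2, tsum_mul_left]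
    rfl
  have h4 : Fq q n - Fq q (n + 1) = q ^ (n + 1) * Fq q n := by rw [← h1, h3]
  linear_combination -h4

lemma Gq_rec (hq : ‖q‖ < 1) (n : ℕ) :
    Gq q n - Gq q (n + 1) = q ^ (n + 1) * (Gq q n + Fq q n) := by
  have hB := SB hq n
  have hB1 := SB hq (n + 1)
  set u : ℕ → ℂ := fun m => ((m : ℂ) + 1) * q ^ ((n + 1) * (m + 1)) / P q (m + 1)
    - ((m : ℂ) + 1) * q ^ ((n + 2) * (m + 1)) / P q (m + 1) with hu
  have h1 : ∑' m, u m = Gq q n - Gq q (n + 1) := Summable.tsum_sub hB hB1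
  have h2 : ∀ m : ℕ, u m = ((m : ℂ) + 1) * q ^ ((n + 1) * (m + 1)) / P q m := by
    intro m
    have hfac := factor_ne hq m
    have hPm := P_ne hq m
    rw [hu]
    simp only
    rw [P_succ]
    field_simp [hPm, hfac]
    ring
  have hv := SV hq n
  have hd := SD hq n
  have h3 : ∑' m, u m = (∑' m : ℕ, (m : ℂ) * q ^ ((n + 1) * (m + 1)) / P q m)
      + ∑' m, q ^ ((n + 1) * (m + 1)) / P q m := by
    rw [tsum_congr h2, ← Summable.tsum_add hd hv]
    exact tsum_congr fun m => by ring
  have h4 : ∑' m, q ^ ((n + 1) * (m + 1)) / P q m = q ^ (n + 1) * Fq q n := by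
    have hc : ∀ m : ℕ, q ^ ((n + 1) * (m + 1)) / P q m
        = q ^ (n + 1) * (q ^ ((n + 1) * m) / P q m) := by
      intro m
      rw [show (n + 1) * (m + 1) = (n + 1) * m + (n + 1) by ring, pow_add]
      ring
    rw [tsum_congr hc, tsum_mul_left]
    rfl
  have h5 : ∑' m : ℕ, (m : ℂ) * q ^ ((n + 1) * (m + 1)) / P q m = q ^ (n + 1) * Gq q n := by
    have h0 : ((0 : ℕ) : ℂ) * q ^ ((n + 1) * (0 + 1)) / P q 0 = 0 := by simp
    rw [tsum_shift hd h0]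
    have hc : ∀ m : ℕ, (((m + 1 : ℕ)) : ℂ) * q ^ ((n + 1) * ((m + 1) + 1)) / P q (m + 1)
        = q ^ (n + 1) * (((m : ℂ) + 1) * q ^ ((n + 1) * (m + 1)) / P q (m + 1)) := by
      intro m
      push_cast
      rw [show (n + 1) * (m + 1 + 1) = (n + 1) * (m + 1) + (n + 1) by ring, pow_add]
      ring
    rw [tsum_congr hc, tsum_mul_left]
    rfl
  have h6 : Gq q n - Gq q (n + 1)
      = q ^ (n + 1) * Gq q n + q ^ (n + 1) * Fq q n := by rw [← h1, h3, h4, h5]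
  linear_combination h6

lemma Fq_closed (hq : ‖q‖ < 1) (n : ℕ) : Fq q n = P q n * Fq q 0 := by
  induction n with
  | zero => simp [P]
  | succ n ih => rw [Fq_rec hq n, ih, P_succ]; ring

lemma key_partial (hq : ‖q‖ < 1) (n : ℕ) :
    Fq q 0 * (∑ k ∈ Finset.range n, q ^ (k + 1) / (1 - q ^ (k + 1)))
      = Gq q 0 - Gq q n / P q n := by
  induction n with
  | zero => simp [P]
  | succ n ih =>
    rw [Finset.sum_range_succ, mul_add, ih]
    have hG : Gq q (n + 1) = Gq q n - q ^ (n + 1) * (Gq q n + Fq q n) := by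
      linear_combination -(Gq_rec hq n)
    rw [hG, P_succ, Fq_closed hq n]
    have hPn := P_ne hq n
    have hfac := factor_ne hq n
    field_simp
    ring

end Uchimura
namespace Uchimura
variable {q : ℂ}

lemma summable_T (hq : ‖q‖ < 1) : Summable (fun k : ℕ => q ^ (k + 1) / (1 - q ^ (k + 1))) := by
  apply Summable.of_norm_bounded (g := fun k => (1 - ‖q‖)⁻¹ * (‖q‖ * ‖q‖ ^ k))
    (((summable_geometric_of_lt_one (norm_nonneg q) hq).mul_left ‖q‖).mul_left (1 - ‖q‖)⁻¹)
  intro k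
  rw [norm_div, norm_pow]
  have h1r : (0:ℝ) < 1 - ‖q‖ := by linarith
  have hd : 1 - ‖q‖ ≤ ‖1 - q ^ (k + 1)‖ := by
    have h := norm_sub_norm_le (1 : ℂ) (q ^ (k + 1))
    rw [norm_one, norm_pow] at h
    have h2 : ‖q‖ ^ (k + 1) ≤ ‖q‖ := by
      simpa using pow_norm_le hq (show 1 ≤ k + 1 by omega)
    linarith
  calc ‖q‖ ^ (k + 1) / ‖1 - q ^ (k + 1)‖ ≤ ‖q‖ ^ (k + 1) / (1 - ‖q‖) := by
        gcongr
    _ = (1 - ‖q‖)⁻¹ * (‖q‖ * ‖q‖ ^ k) := by rw [pow_succ]; field_simp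

lemma Glim (hq : ‖q‖ < 1) : Tendsto (fun n => Gq q n / P q n) atTop (𝓝 0) := by
  set C := Real.exp (-(‖q‖ / (1 - ‖q‖) ^ 2)) with hC
  have hCpos : (0:ℝ) < C := Real.exp_pos _
  set D := ∑' m : ℕ, ((m : ℝ) + 1) * ‖q‖ ^ m with hD
  have hD0 : (0:ℝ) ≤ D := tsum_nonneg (fun m => by positivity)
  have hb : ∀ n : ℕ, ‖Gq q n / P q n‖ ≤ ‖q‖ ^ (n + 1) * (C⁻¹ * D / C) := by
    intro n
    have hsn : Summable (fun m : ℕ => ‖((m : ℂ) + 1) * q ^ ((n + 1) * (m + 1)) / P q (m + 1)‖) := by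
      apply Summable.of_nonneg_of_le (fun m => norm_nonneg _) (norm_term_le' hq n 1)
      exact (summable_base hq).mul_left _
    have hGn : ‖Gq q n‖ ≤ (C⁻¹ * ‖q‖ ^ (n + 1)) * D := by
      refine (norm_tsum_le_tsum_norm hsn).trans ?_
      have h2 := Summable.tsum_le_tsum (norm_term_le' hq n 1) hsn ((summable_base hq).mul_left _)
      rwa [tsum_mul_left, ← hD] at h2
    rw [norm_div]
    calc ‖Gq q n‖ / ‖P q n‖ ≤ ((C⁻¹ * ‖q‖ ^ (n + 1)) * D) / C :=
          div_le_div₀ (mul_nonneg (by positivity) hD0) hGn hCpos (P_lower hq n)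
      _ = ‖q‖ ^ (n + 1) * (C⁻¹ * D / C) := by ring
  have h0 : Tendsto (fun n : ℕ => ‖q‖ ^ n * (C⁻¹ * D / C)) atTop (𝓝 (0 * (C⁻¹ * D / C))) :=
    (tendsto_pow_atTop_nhds_zero_of_lt_one (norm_nonneg q) hq).mul_const _
  rw [zero_mul] at h0
  exact squeeze_zero_norm hb (h0.comp (tendsto_add_atTop_nat 1))

lemma Flim (hq : ‖q‖ < 1) : Tendsto (fun n => Fq q n) atTop (𝓝 1) := by
  set C := Real.exp (-(‖q‖ / (1 - ‖q‖) ^ 2)) with hC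
  have hCpos : (0:ℝ) < C := Real.exp_pos _
  have h1r : (0:ℝ) < 1 - ‖q‖ := by linarith
  have key : ∀ n : ℕ, Fq q n - 1 = ∑' m : ℕ, q ^ ((n + 1) * (m + 1)) / P q (m + 1) := by
    intro n
    have h := Summable.tsum_eq_zero_add (SA hq n)
    have h0 : q ^ ((n + 1) * 0) / P q 0 = 1 := by simp [P]
    rw [h0] at h
    have : Fq q n = 1 + ∑' m : ℕ, q ^ ((n + 1) * (m + 1)) / P q (m + 1) := h
    rw [this]; ring
  have hbt : ∀ n m : ℕ, ‖q ^ ((n + 1) * (m + 1)) / P q (m + 1)‖ ≤ (C⁻¹ * ‖q‖ ^ (n + 1)) * ‖q‖ ^ m := by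
    intro n m
    refine (norm_div_P_le hq _ _).trans ?_
    rw [norm_pow]
    have h1 : ‖q‖ ^ ((n + 1) * (m + 1)) ≤ ‖q‖ ^ (n + 1) * ‖q‖ ^ m := by
      rw [← pow_add]
      exact pow_norm_le hq (by nlinarith)
    calc ‖q‖ ^ ((n + 1) * (m + 1)) * C⁻¹ ≤ (‖q‖ ^ (n + 1) * ‖q‖ ^ m) * C⁻¹ := by
          apply mul_le_mul_of_nonneg_right h1 (by positivity)
      _ = (C⁻¹ * ‖q‖ ^ (n + 1)) * ‖q‖ ^ m := by ring
  have hb : ∀ n : ℕ, ‖Fq q n - 1‖ ≤ ‖q‖ ^ (n + 1) * (C⁻¹ * (1 - ‖q‖)⁻¹) := by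
    intro n
    rw [key n]
    have hsn : Summable (fun m : ℕ => ‖q ^ ((n + 1) * (m + 1)) / P q (m + 1)‖) := by
      apply Summable.of_nonneg_of_le (fun m => norm_nonneg _) (hbt n)
      exact (summable_geometric_of_lt_one (norm_nonneg q) hq).mul_left _
    refine (norm_tsum_le_tsum_norm hsn).trans ?_
    have h2 := Summable.tsum_le_tsum (hbt n) hsn
      ((summable_geometric_of_lt_one (norm_nonneg q) hq).mul_left _)
    rw [tsum_mul_left, tsum_geometric_of_lt_one (norm_nonneg q) hq] at h2
    calc ∑' m : ℕ, ‖q ^ ((n + 1) * (m + 1)) / P q (m + 1)‖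
        ≤ C⁻¹ * ‖q‖ ^ (n + 1) * (1 - ‖q‖)⁻¹ := h2
      _ = ‖q‖ ^ (n + 1) * (C⁻¹ * (1 - ‖q‖)⁻¹) := by ring
  have h0 : Tendsto (fun n : ℕ => ‖q‖ ^ n * (C⁻¹ * (1 - ‖q‖)⁻¹)) atTop
      (𝓝 (0 * (C⁻¹ * (1 - ‖q‖)⁻¹))) :=
    (tendsto_pow_atTop_nhds_zero_of_lt_one (norm_nonneg q) hq).mul_const _
  rw [zero_mul] at h0
  have h1 : Tendsto (fun n => Fq q n - 1) atTop (𝓝 0) :=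
    squeeze_zero_norm hb (h0.comp (tendsto_add_atTop_nat 1))
  have h2 := h1.add_const 1
  simpa using h2

lemma multi (hq : ‖q‖ < 1) : Multipliable (fun k : ℕ => 1 - q ^ (k + 1)) := by
  have hlog : Summable (fun k : ℕ => Complex.log (1 - q ^ (k + 1))) := by
    obtain ⟨N, hN⟩ : ∃ N : ℕ, ‖q‖ ^ N ≤ 1 / 2 := by
      have ht := tendsto_pow_atTop_nhds_zero_of_lt_one (norm_nonneg q) hq
      exact (ht.eventually (eventually_le_nhds (by norm_num : (0:ℝ) < 1 / 2))).exists
    have hshift : Summable (fun k : ℕ => Complex.log (1 - q ^ (k + N + 1))) := by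
      apply Summable.of_norm_bounded (g := fun k => (3 / 2 : ℝ) * (‖q‖ ^ N * (‖q‖ * ‖q‖ ^ k)))
        ((((summable_geometric_of_lt_one (norm_nonneg q) hq).mul_left ‖q‖).mul_left
          (‖q‖ ^ N)).mul_left (3 / 2 : ℝ))
      intro k
      have hz : ‖-q ^ (k + N + 1)‖ ≤ 1 / 2 := by
        rw [norm_neg, norm_pow]
        exact (pow_norm_le hq (by omega)).trans hN
      have h := Complex.norm_log_one_add_half_le_self hz
      rw [← sub_eq_add_neg] at h
      refine h.trans ?_
      rw [norm_neg, norm_pow]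
      apply le_of_eq
      ring
    rw [← summable_nat_add_iff N]
    exact hshift
  exact Complex.multipliable_of_summable_log hlog

end Uchimura

open Uchimura in
/-- `(q;q)_∞ · ∑_{m≥1} m qᵐ/(q;q)_m = ∑_{m≥1} qᵐ/(1−qᵐ)` for `|q| < 1`. -/
theorem etaProd_mul_weighted_sum (q : ℂ) (hq : ‖q‖ < 1) :
    (∏' k : ℕ, (1 - q ^ (k + 1))) *
        ∑' m : ℕ, ((m : ℂ) + 1) * q ^ (m + 1) / ∏ i ∈ range (m + 1), (1 - q ^ (i + 1)) =
      ∑' m : ℕ, q ^ (m + 1) / (1 - q ^ (m + 1)) := by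
  have hM := multi hq
  have hPl : Tendsto (fun n => P q n) atTop (𝓝 (∏' k : ℕ, (1 - q ^ (k + 1)))) :=
    hM.hasProd.tendsto_prod_nat
  have hFl := Flim hq
  have hEF : (∏' k : ℕ, (1 - q ^ (k + 1))) * Fq q 0 = 1 := by
    have h := hPl.mul_const (Fq q 0)
    have heq : (fun n => P q n * Fq q 0) = fun n => Fq q n :=
      funext fun n => (Fq_closed hq n).symm
    rw [heq] at h
    exact tendsto_nhds_unique h hFl
  have hTs := summable_T hq
  have hkey : Fq q 0 * (∑' k : ℕ, q ^ (k + 1) / (1 - q ^ (k + 1))) = Gq q 0 := by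
    have h1 : Tendsto (fun n => Fq q 0 * ∑ k ∈ Finset.range n, q ^ (k + 1) / (1 - q ^ (k + 1)))
        atTop (𝓝 (Fq q 0 * ∑' k : ℕ, q ^ (k + 1) / (1 - q ^ (k + 1)))) :=
      (hTs.hasSum.tendsto_sum_nat).const_mul _
    have h2 : Tendsto (fun n => Gq q 0 - Gq q n / P q n) atTop (𝓝 (Gq q 0 - 0)) :=
      tendsto_const_nhds.sub (Glim hq)
    have h3 : (fun n => Fq q 0 * ∑ k ∈ Finset.range n, q ^ (k + 1) / (1 - q ^ (k + 1)))
        = fun n => Gq q 0 - Gq q n / P q n := funext fun n => key_partial hq n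
    rw [h3] at h1
    have h4 := tendsto_nhds_unique h1 h2
    rwa [sub_zero] at h4
  have hG0 : (∑' m : ℕ, ((m : ℂ) + 1) * q ^ (m + 1) / ∏ i ∈ range (m + 1), (1 - q ^ (i + 1)))
      = Gq q 0 := by
    rw [Gq]
    exact tsum_congr fun m => by norm_num [P]
  calc (∏' k : ℕ, (1 - q ^ (k + 1))) *
        ∑' m : ℕ, ((m : ℂ) + 1) * q ^ (m + 1) / ∏ i ∈ range (m + 1), (1 - q ^ (i + 1))
      = (∏' k : ℕ, (1 - q ^ (k + 1))) * Gq q 0 := by rw [hG0]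
    _ = (∏' k : ℕ, (1 - q ^ (k + 1))) *
          (Fq q 0 * ∑' k : ℕ, q ^ (k + 1) / (1 - q ^ (k + 1))) := by rw [hkey]
    _ = ((∏' k : ℕ, (1 - q ^ (k + 1))) * Fq q 0) *
          ∑' k : ℕ, q ^ (k + 1) / (1 - q ^ (k + 1)) := by ring
    _ = ∑' m : ℕ, q ^ (m + 1) / (1 - q ^ (m + 1)) := by rw [hEF, one_mul]
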